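/- Let G be a 3-connected cubic nonbipartite graph. If G has two edges e1 and e2 such that G − {e1, e2} is bipartite, then G is matching covered and {e1, e2} is a removable doubleton of G, i.e., neither e1 nor e2 is removable but G − {e1, e2} is matching covered. -/

import Mathlib

open SimpleGraph Set

universe u
variable {V : Type u}

/-- Number of odd components of a graph. -/
noncomputable def oddComps (G : SimpleGraph V) : ℕ :=
  Nat.card {c : G.ConnectedComponent // Odd (Nat.card c.supp)}

/-- `S` is a barrier of `G`: the number of odd components of `G − S` equals `|S|`. -/
def IsBarrier (G : SimpleGraph V) (S : Set V) : Prop :=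
  oddComps (G.induce Sᶜ) = S.ncard

/-- `G` has a perfect matching. -/
def HasPM (G : SimpleGraph V) : Prop :=
  ∃ M : Subgraph G, M.IsPerfectMatching

/-- `G` is matching covered. -/
def MatchingCovered (G : SimpleGraph V) : Prop :=
  G.Connected ∧ G.edgeSet.Nonempty ∧
    ∀ e ∈ G.edgeSet, ∃ M : Subgraph G, M.IsPerfectMatching ∧ e ∈ M.edgeSet

/-- An edge `e` of a matching covered graph `G` is removable. -/
def Removable (G : SimpleGraph V) (e : Sym2 V) : Prop :=
  e ∈ G.edgeSet ∧ MatchingCovered (G.deleteEdges {e})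

/-- `G` is 3-connected. -/
def ThreeConnected (G : SimpleGraph V) : Prop :=
  4 ≤ Nat.card V ∧ ∀ S : Set V, S.ncard ≤ 2 → (G.induce Sᶜ).Connected

/-- A brick. -/
def IsBrick (G : SimpleGraph V) : Prop :=
  ThreeConnected G ∧ ∀ x y : V, x ≠ y → HasPM (G.induce ({x, y} : Set V)ᶜ)

/-- neighbours outside `S` of vertices of `S`. -/
def Nbrs (G : SimpleGraph V) (S : Set V) : Set V :=
  {v | v ∉ S ∧ ∃ u ∈ S, G.Adj u v}

/-- factor-critical graph. -/
def FactorCritical (G : SimpleGraph V) : Prop :=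
  ∀ v : V, HasPM (G.induce ({v} : Set V)ᶜ)

/-- `(U, W)` is a bipartition of `G`. -/
def IsBipartition (G : SimpleGraph V) (U W : Set V) : Prop :=
  Disjoint U W ∧ U ∪ W = Set.univ ∧
    ∀ a b : V, G.Adj a b → (a ∈ U ∧ b ∈ W) ∨ (a ∈ W ∧ b ∈ U)

set_option linter.unusedSectionVars false
set_option linter.unusedVariables false
set_option maxHeartbeats 1000000

namespace Stmt16Aux
open Finset


variable [Fintype V] [DecidableEq V]

lemma adj_sum_comm (F : SimpleGraph V) [DecidableRel F.Adj] (A B : Finset V) :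
    ∑ a ∈ A, (B.filter (F.Adj a)).card = ∑ b ∈ B, (A.filter (F.Adj b)).card := by
  simp_rw [Finset.card_filter]
  rw [Finset.sum_comm]
  exact Finset.sum_congr rfl fun b _ => Finset.sum_congr rfl fun a _ => by
    simp [adj_comm]

lemma cut_lemma {G : SimpleGraph V} [DecidableRel G.Adj]
    (hcubic : ∀ v : V, G.degree v = 3)
    (h3 : ∀ S : Set V, S.ncard ≤ 2 → (G.induce Sᶜ).Connected)
    (X : Finset V) (hX : X.Nonempty) (hXc : Xᶜ.Nonempty)
    (hD : ∑ x ∈ X, (Xᶜ.filter (G.Adj x)).card ≤ 2) : False := by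
  classical
  set S₀ : Finset V := X.filter (fun x => (Xᶜ.filter (G.Adj x)).Nonempty) with hS₀def
  have hS₀sub : S₀ ⊆ X := Finset.filter_subset _ _
  have hS₀card : S₀.card ≤ 2 := by
    calc S₀.card = ∑ _x ∈ S₀, 1 := by simp
    _ ≤ ∑ x ∈ S₀, (Xᶜ.filter (G.Adj x)).card :=
        Finset.sum_le_sum (fun x hx => Finset.card_pos.mpr (Finset.mem_filter.mp hx).2)
    _ ≤ ∑ x ∈ X, (Xᶜ.filter (G.Adj x)).card :=
        Finset.sum_le_sum_of_subset hS₀sub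
    _ ≤ 2 := hD
  by_cases hall : X ⊆ S₀
  · have hXcard : X.card ≤ 2 := le_trans (Finset.card_le_card hall) hS₀card
    have hlow : ∀ x ∈ X, 4 ≤ (Xᶜ.filter (G.Adj x)).card + X.card := by
      intro x hx
      have hdeg : (Finset.univ.filter (G.Adj x)).card = 3 := by
        rw [← neighborFinset_eq_filter, card_neighborFinset_eq_degree]
        exact hcubic x
      have hun : (X.filter (G.Adj x)) ∪ (Xᶜ.filter (G.Adj x)) = Finset.univ.filter (G.Adj x) := by
        rw [← Finset.filter_union, Finset.union_compl]
      have hdisj : Disjoint (X.filter (G.Adj x)) (Xᶜ.filter (G.Adj x)) :=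
        Finset.disjoint_filter_filter disjoint_compl_right
      have hcards : (X.filter (G.Adj x)).card + (Xᶜ.filter (G.Adj x)).card = 3 := by
        rw [← Finset.card_union_of_disjoint hdisj, hun, hdeg]
      have hsub : X.filter (G.Adj x) ⊆ X.erase x := by
        intro y hy
        rw [Finset.mem_filter] at hy
        exact Finset.mem_erase.mpr ⟨(G.ne_of_adj hy.2).symm, hy.1⟩
      have := Finset.card_le_card hsub
      rw [Finset.card_erase_of_mem hx] at this
      have hx1 : 1 ≤ X.card := Finset.card_pos.mpr ⟨x, hx⟩
      omega
    have hsum : 4 * X.card ≤ (∑ x ∈ X, (Xᶜ.filter (G.Adj x)).card) + X.card * X.card := by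
      calc 4 * X.card = ∑ _x ∈ X, 4 := by rw [Finset.sum_const, smul_eq_mul, mul_comm]
      _ ≤ ∑ x ∈ X, ((Xᶜ.filter (G.Adj x)).card + X.card) := Finset.sum_le_sum hlow
      _ = _ := by rw [Finset.sum_add_distrib, Finset.sum_const, smul_eq_mul]
    have h1 : 1 ≤ X.card := hX.card_pos
    have h12 : X.card = 1 ∨ X.card = 2 := by omega
    rcases h12 with h | h <;> rw [h] at hsum <;> omega
  · obtain ⟨x₀, hx₀X, hx₀S⟩ := Finset.not_subset.mp hall
    obtain ⟨y₀, hy₀⟩ := hXc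
    have hy₀X : y₀ ∉ X := Finset.mem_compl.mp hy₀
    have hconn := h3 (↑S₀) (by rw [Set.ncard_coe_finset]; exact hS₀card)
    have hx₀' : (x₀ : V) ∈ ((↑S₀ : Set V)ᶜ : Set V) := by simpa using hx₀S
    have hy₀' : (y₀ : V) ∈ ((↑S₀ : Set V)ᶜ : Set V) := by
      simpa using fun h => hy₀X (hS₀sub h)
    suffices Hw : ∀ (a b : ((↑S₀ : Set V)ᶜ : Set V))
        (_w : (G.induce ((↑S₀ : Set V)ᶜ)).Walk a b), (a : V) ∈ X → (b : V) ∈ X by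
      exact hy₀X (Hw ⟨x₀, hx₀'⟩ ⟨y₀, hy₀'⟩ (hconn ⟨x₀, hx₀'⟩ ⟨y₀, hy₀'⟩).some hx₀X)
    intro a b w
    induction w with
    | nil => exact id
    | @cons u v c hadj p ih =>
      intro hu
      by_cases hv : (v : V) ∈ X
      · exact ih hv
      · exfalso
        have hGadj : G.Adj u v := hadj
        exact u.2 (Finset.mem_coe.mpr (Finset.mem_filter.mpr
          ⟨hu, ⟨v, Finset.mem_filter.mpr ⟨Finset.mem_compl.mpr hv, hGadj⟩⟩⟩))

lemma pairDartBound {G : SimpleGraph V} [DecidableRel G.Adj] (c d : V) (hcd : c ≠ d)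
    (A X : Finset V) (hAX : A ⊆ X) :
    (∑ a ∈ A, (Xᶜ.filter (fun y => s(a, y) = s(c, d))).card) + (A ∩ {c, d}).card ≤ 2 ∧
    (∑ a ∈ A, (Xᶜ.filter (fun y => s(a, y) = s(c, d))).card) ≤ (A ∩ {c, d}).card := by
  classical
  have hterm0 : ∀ a ∈ A, a ∉ ({c, d} : Finset V) →
      (Xᶜ.filter (fun y => s(a, y) = s(c, d))).card = 0 := by
    intro a _ ha
    rw [Finset.card_eq_zero, Finset.filter_eq_empty_iff]
    intro y _
    intro h
    rw [Sym2.eq_iff] at h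
    rcases h with ⟨rfl, rfl⟩ | ⟨rfl, rfl⟩ <;> simp at ha
  have htermle : ∀ a ∈ A, (Xᶜ.filter (fun y => s(a, y) = s(c, d))).card ≤
      (({c, d} : Finset V) \ X).card := by
    intro a _
    apply Finset.card_le_card
    intro y hy
    rw [Finset.mem_filter, Finset.mem_compl] at hy
    obtain ⟨hyX, hy⟩ := hy
    rw [Sym2.eq_iff] at hy
    rw [Finset.mem_sdiff]
    rcases hy with ⟨rfl, rfl⟩ | ⟨rfl, rfl⟩ <;> simp [hyX]
  have hsum_eq : (∑ a ∈ A, (Xᶜ.filter (fun y => s(a, y) = s(c, d))).card) =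
      ∑ a ∈ A ∩ {c, d}, (Xᶜ.filter (fun y => s(a, y) = s(c, d))).card := by
    refine (Finset.sum_subset Finset.inter_subset_left ?_).symm
    intro a haA ha
    exact hterm0 a haA (fun h => ha (Finset.mem_inter.mpr ⟨haA, h⟩))
  have hbound : (∑ a ∈ A, (Xᶜ.filter (fun y => s(a, y) = s(c, d))).card) ≤
      (A ∩ {c, d}).card * (({c, d} : Finset V) \ X).card := by
    rw [hsum_eq]
    exact Finset.sum_le_card_nsmul _ _ _ (fun a ha => htermle a (Finset.mem_inter.mp ha).1)
  have hdisj : Disjoint (A ∩ {c, d}) (({c, d} : Finset V) \ X) := by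
    refine Finset.disjoint_left.mpr ?_
    intro a ha ha'
    exact (Finset.mem_sdiff.mp ha').2 (hAX (Finset.mem_inter.mp ha).1)
  have hsum2 : (A ∩ {c, d}).card + (({c, d} : Finset V) \ X).card ≤ 2 := by
    rw [← Finset.card_union_of_disjoint hdisj]
    calc ((A ∩ {c, d}) ∪ (({c, d} : Finset V) \ X)).card ≤ ({c, d} : Finset V).card :=
      Finset.card_le_card (by
        intro x hx
        rcases Finset.mem_union.mp hx with h | h
        · exact (Finset.mem_inter.mp h).2
        · exact (Finset.mem_sdiff.mp h).1)
    _ ≤ 2 := Finset.card_insert_le _ _ |>.trans (by simp)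
  set p := (A ∩ {c, d}).card
  set r := (({c, d} : Finset V) \ X).card
  constructor
  · have hp2 : p ≤ 2 := by omega
    have : p = 0 ∨ p = 1 ∨ p = 2 := by omega
    rcases this with h | h | h <;> rw [h] at hbound ⊢ <;> omega
  · have : p = 0 ∨ p = 1 ∨ p = 2 := by omega
    rcases this with h | h | h <;> rw [h] at hbound ⊢ <;> omega

lemma exists_matching_of_hall (B : SimpleGraph V) [DecidableRel B.Adj] (X Y : Finset V)
    (hdisj : Disjoint (X : Set V) (Y : Set V)) (hcard : X.card = Y.card)
    (hall : ∀ A : Finset V, A ⊆ X → A.card ≤ (Y.filter (fun y => ∃ a ∈ A, B.Adj a y)).card) :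
    ∃ M : Subgraph B, M.verts = ↑X ∪ ↑Y ∧ M.IsMatching := by
  classical
  set t : ↥X → Finset V := fun x => Y.filter (fun y => B.Adj x y) with ht
  have hallt : ∀ s : Finset ↥X, s.card ≤ (s.biUnion t).card := by
    intro s
    have himg : s.card = (s.image (Subtype.val)).card :=
      (Finset.card_image_of_injective s Subtype.val_injective).symm
    rw [himg]
    refine le_trans (hall _ ?_) (Finset.card_le_card ?_)
    · intro a ha
      obtain ⟨x, _, rfl⟩ := Finset.mem_image.mp ha
      exact x.2
    · intro y hy
      rw [Finset.mem_filter] at hy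
      obtain ⟨hyY, a, haim, hadj⟩ := hy
      obtain ⟨x, hxs, rfl⟩ := Finset.mem_image.mp haim
      exact Finset.mem_biUnion.mpr ⟨x, hxs, Finset.mem_filter.mpr ⟨hyY, hadj⟩⟩
  obtain ⟨f, hfinj, hf⟩ := (Finset.all_card_le_biUnion_card_iff_exists_injective t).mp hallt
  have hfY : ∀ x, f x ∈ Y := fun x => (Finset.mem_filter.mp (hf x)).1
  have hfadj : ∀ x : ↥X, B.Adj x (f x) := fun x => (Finset.mem_filter.mp (hf x)).2
  set f' : ↥X → ↥Y := fun x => ⟨f x, hfY x⟩ with hf'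
  have hf'inj : Function.Injective f' := fun a b h => hfinj (congrArg Subtype.val h)
  have hbij : Function.Bijective f' := by
    rw [Fintype.bijective_iff_injective_and_card]
    refine ⟨hf'inj, ?_⟩
    simp [Fintype.card_coe, hcard]
  set g : ↥(↑X : Set V) → ↥(↑Y : Set V) := fun v => ⟨f ⟨v.1, v.2⟩, hfY _⟩ with hg
  have hginj : Function.Injective g := by
    intro a b h
    have := hfinj (congrArg Subtype.val h)
    exact Subtype.ext (congrArg Subtype.val this)
  have hbij : Function.Bijective g := by
    rw [Fintype.bijective_iff_injective_and_card]
    refine ⟨hginj, ?_⟩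
    simp [hcard]
  set e' : ↥(↑X : Set V) ≃ ↥(↑Y : Set V) := Equiv.ofBijective g hbij with he'
  have hadj' : ∀ v : ↥(↑X : Set V), B.Adj v (e' v) := by
    intro v
    exact hfadj ⟨v.1, v.2⟩
  obtain ⟨M, hMv, hMm⟩ := Subgraph.IsMatching.exists_of_disjoint_sets_of_equiv hdisj e' hadj'
  exact ⟨M, hMv, hMm⟩

variable {G H : SimpleGraph V} [DecidableRel G.Adj] [DecidableRel H.Adj]
variable {a1 b1 a2 b2 : V} {U W : Finset V}

section Config
variable (hH : ∀ x y, H.Adj x y ↔ G.Adj x y ∧ s(x, y) ≠ s(a1, b1) ∧ s(x, y) ≠ s(a2, b2))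
  (he1 : G.Adj a1 b1) (he2 : G.Adj a2 b2)
  (ha1 : a1 ∈ U) (hb1 : b1 ∈ U) (ha2 : a2 ∈ W) (hb2 : b2 ∈ W)
  (hpart : ∀ v, v ∈ W ↔ v ∉ U)
  (hcross : ∀ x y, H.Adj x y → (x ∈ U ↔ y ∈ W))
  (hcard : U.card = W.card)

include hH he1 he2 ha1 hb1 ha2 hb2 hpart hcross in
lemma degU (hcubic : ∀ v : V, G.degree v = 3) (x : V) (hx : x ∈ U) :
    (univ.filter (H.Adj x)).card + (if x = a1 ∨ x = b1 then 1 else 0) = 3 := by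
  have hab1 : a1 ≠ b1 := he1.ne
  have ha2U : a2 ∉ U := (hpart a2).mp ha2
  have hb2U : b2 ∉ U := (hpart b2).mp hb2
  by_cases hxa : x = a1
  · subst hxa
    have key : univ.filter (H.Adj x) = (univ.filter (G.Adj x)).erase b1 := by
      ext y
      simp only [Finset.mem_filter, Finset.mem_erase, Finset.mem_univ, true_and, hH]
      constructor
      · rintro ⟨hg, hne1, -⟩
        refine ⟨fun hyb => hne1 ?_, hg⟩
        subst hyb; rfl
      · rintro ⟨hyb, hg⟩
        refine ⟨hg, ?_, ?_⟩
        · intro h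
          rw [Sym2.eq_iff] at h
          rcases h with ⟨-, h⟩ | ⟨h, -⟩
          · exact hyb h
          · exact hab1 h
        · intro h
          rw [Sym2.eq_iff] at h
          rcases h with ⟨h, -⟩ | ⟨h, -⟩
          · exact ha2U (h ▸ hx)
          · exact hb2U (h ▸ hx)
    rw [key, Finset.card_erase_of_mem (by simpa using he1), if_pos (Or.inl rfl)]
    have : (univ.filter (G.Adj x)).card = 3 := by
      rw [← neighborFinset_eq_filter, card_neighborFinset_eq_degree]; exact hcubic x
    omega
  · by_cases hxb : x = b1
    · subst hxb
      have key : univ.filter (H.Adj x) = (univ.filter (G.Adj x)).erase a1 := by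
        ext y
        simp only [Finset.mem_filter, Finset.mem_erase, Finset.mem_univ, true_and, hH]
        constructor
        · rintro ⟨hg, hne1, -⟩
          refine ⟨fun hya => hne1 ?_, hg⟩
          subst hya; rw [Sym2.eq_swap]
        · rintro ⟨hya, hg⟩
          refine ⟨hg, ?_, ?_⟩
          · intro h
            rw [Sym2.eq_iff] at h
            rcases h with ⟨h, -⟩ | ⟨-, h⟩
            · exact hxa h
            · exact hya h
          · intro h
            rw [Sym2.eq_iff] at h
            rcases h with ⟨h, -⟩ | ⟨h, -⟩
            · exact ha2U (h ▸ hx)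
            · exact hb2U (h ▸ hx)
      rw [key, Finset.card_erase_of_mem (by simpa using he1.symm), if_pos (Or.inr rfl)]
      have : (univ.filter (G.Adj x)).card = 3 := by
        rw [← neighborFinset_eq_filter, card_neighborFinset_eq_degree]; exact hcubic x
      omega
    · have key : univ.filter (H.Adj x) = univ.filter (G.Adj x) := by
        ext y
        simp only [Finset.mem_filter, Finset.mem_univ, true_and, hH]
        refine ⟨fun h => h.1, fun hg => ⟨hg, ?_, ?_⟩⟩
        · intro h
          rw [Sym2.eq_iff] at h
          rcases h with ⟨h, -⟩ | ⟨h, -⟩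
          · exact hxa h
          · exact hxb h
        · intro h
          rw [Sym2.eq_iff] at h
          rcases h with ⟨h, -⟩ | ⟨h, -⟩
          · exact ha2U (h ▸ hx)
          · exact hb2U (h ▸ hx)
      rw [key, if_neg (by tauto)]
      rw [← neighborFinset_eq_filter, card_neighborFinset_eq_degree]
      exact hcubic x


include hH he1 he2 ha1 hb1 ha2 hb2 hpart hcross hcard in
lemma hallAux (hcubic : ∀ v : V, G.degree v = 3)
    (h3 : ∀ S : Set V, S.ncard ≤ 2 → (G.induce Sᶜ).Connected)
    (A R : Finset V) (hAU : A ⊆ U) (hAne : A.Nonempty)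
    (hz : ∃ z ∈ U, z ∉ A)
    (hbad : ((univ.filter (fun y => ∃ a ∈ A, H.Adj a y)) \ R).card < A.card)
    (hcase : ((univ.filter (fun y => ∃ a ∈ A, H.Adj a y)) ∩ R).card ≤ 1 ∨
      (((univ.filter (fun y => ∃ a ∈ A, H.Adj a y)) ∩ R).card ≤
        ((univ.filter (fun y => ∃ a ∈ A, H.Adj a y)) ∩ ({a2, b2} : Finset V)).card ∧
        (A ∩ ({a1, b1} : Finset V)).card = 0)) : False := by
  classical
  set T : Finset V := univ.filter (fun y => ∃ a ∈ A, H.Adj a y) with hT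
  have hTW : T ⊆ W := by
    intro y hy
    rw [hT, Finset.mem_filter] at hy
    obtain ⟨-, a, haA, hadj⟩ := hy
    exact (hcross a y hadj).mp (hAU haA)
  have hUWdisj : ∀ v, v ∈ U → v ∉ W := fun v hv hw => (hpart v).mp hw hv
  have hdisjAT : Disjoint A T :=
    Finset.disjoint_left.mpr (fun a haA haT => hUWdisj a (hAU haA) (hTW haT))
  set X : Finset V := A ∪ T with hX
  have hAX : A ⊆ X := Finset.subset_union_left
  have hTX : T ⊆ X := Finset.subset_union_right
  -- the complement is nonempty
  obtain ⟨z, hzU, hzA⟩ := hz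
  have hzX : z ∈ Xᶜ := by
    rw [Finset.mem_compl, hX, Finset.mem_union]
    rintro (h | h)
    · exact hzA h
    · exact hUWdisj z hzU (hTW h)
  -- membership facts
  have hab1 : a1 ≠ b1 := he1.ne
  have hab2 : a2 ≠ b2 := he2.ne
  -- A-part bound
  have hApart : ∀ a ∈ A, (Xᶜ.filter (G.Adj a)) ⊆
      (Xᶜ.filter (fun y => s(a, y) = s(a1, b1))) := by
    intro a haA y hy
    rw [Finset.mem_filter] at hy ⊢
    obtain ⟨hyX, hadj⟩ := hy
    refine ⟨hyX, ?_⟩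
    by_contra hne1
    have hne2 : s(a, y) ≠ s(a2, b2) := by
      intro h
      rw [Sym2.eq_iff] at h
      rcases h with ⟨h, -⟩ | ⟨h, -⟩
      · exact hUWdisj a (hAU haA) (h ▸ ha2)
      · exact hUWdisj a (hAU haA) (h ▸ hb2)
    have : H.Adj a y := (hH a y).mpr ⟨hadj, hne1, hne2⟩
    have : y ∈ T := by
      rw [hT, Finset.mem_filter]
      exact ⟨Finset.mem_univ y, a, haA, this⟩
    exact (Finset.mem_compl.mp hyX) (hTX this)
  have hsumA : ∑ a ∈ A, (Xᶜ.filter (G.Adj a)).card ≤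
      ∑ a ∈ A, (Xᶜ.filter (fun y => s(a, y) = s(a1, b1))).card :=
    Finset.sum_le_sum (fun a ha => Finset.card_le_card (hApart a ha))
  obtain ⟨hpb1, hpb2⟩ := pairDartBound (G := G) a1 b1 hab1 A X hAX
  -- T-part bound
  have hTpart : ∀ t ∈ T, (Xᶜ.filter (G.Adj t)) ⊆
      (Xᶜ.filter (H.Adj t)) ∪ (Xᶜ.filter (fun y => s(t, y) = s(a2, b2))) := by
    intro t htT y hy
    rw [Finset.mem_filter] at hy
    obtain ⟨hyX, hadj⟩ := hy
    rw [Finset.mem_union, Finset.mem_filter, Finset.mem_filter]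
    by_cases hHa : H.Adj t y
    · exact Or.inl ⟨hyX, hHa⟩
    · refine Or.inr ⟨hyX, ?_⟩
      rw [hH] at hHa
      push_neg at hHa
      rcases Classical.em (s(t, y) = s(a1, b1)) with h1 | h1
      · exfalso
        rw [Sym2.eq_iff] at h1
        rcases h1 with ⟨h, -⟩ | ⟨h, -⟩
        · exact hUWdisj a1 ha1 (h ▸ hTW htT)
        · exact hUWdisj b1 hb1 (h ▸ hTW htT)
      · exact hHa hadj h1
  have hsumT : ∑ t ∈ T, (Xᶜ.filter (G.Adj t)).card ≤
      (∑ t ∈ T, (Xᶜ.filter (H.Adj t)).card) +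
      ∑ t ∈ T, (Xᶜ.filter (fun y => s(t, y) = s(a2, b2))).card := by
    rw [← Finset.sum_add_distrib]
    refine Finset.sum_le_sum (fun t ht => ?_)
    exact le_trans (Finset.card_le_card (hTpart t ht)) (Finset.card_union_le _ _)
  obtain ⟨hqb1, hqb2⟩ := pairDartBound (G := G) a2 b2 hab2 T X hTX
  -- identity: s2 + sum_A dH = sum_T dH
  have hsplit : ∀ t ∈ T, (Xᶜ.filter (H.Adj t)).card + (A.filter (H.Adj t)).card =
      (univ.filter (H.Adj t)).card := by
    intro t htT
    have hdisj' : Disjoint (Xᶜ.filter (H.Adj t)) (A.filter (H.Adj t)) := by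
      refine Finset.disjoint_left.mpr (fun y hy hy' => ?_)
      exact (Finset.mem_compl.mp (Finset.mem_filter.mp hy).1) (hAX (Finset.mem_filter.mp hy').1)
    rw [← Finset.card_union_of_disjoint hdisj']
    congr 1
    ext y
    simp only [Finset.mem_union, Finset.mem_filter, Finset.mem_compl, Finset.mem_univ, true_and]
    constructor
    · rintro (⟨-, h⟩ | ⟨-, h⟩) <;> exact h
    · intro h
      by_cases hyX : y ∈ X
      · refine Or.inr ⟨?_, h⟩
        have hyU : y ∈ U := by
          have := (hcross t y h).mpr
          have htW : t ∈ W := hTW htT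
          have htU : t ∉ U := fun hc => hUWdisj t hc htW
          by_contra hyU
          have hyW : y ∈ W := (hpart y).mpr hyU
          exact htU ((hcross t y h).mpr hyW)
        rw [hX, Finset.mem_union] at hyX
        rcases hyX with h' | h'
        · exact h'
        · exact absurd (hTW h') (fun hc => hUWdisj y hyU hc)
      · exact Or.inl ⟨hyX, h⟩
  have hid1 : (∑ t ∈ T, (Xᶜ.filter (H.Adj t)).card) + (∑ t ∈ T, (A.filter (H.Adj t)).card) =
      ∑ t ∈ T, (univ.filter (H.Adj t)).card := by
    rw [← Finset.sum_add_distrib]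
    exact Finset.sum_congr rfl hsplit
  have hid2 : ∑ t ∈ T, (A.filter (H.Adj t)).card = ∑ a ∈ A, (univ.filter (H.Adj a)).card := by
    rw [adj_sum_comm]
    refine Finset.sum_congr rfl (fun a haA => ?_)
    congr 1
    ext y
    simp only [Finset.mem_filter, Finset.mem_univ, true_and, hT]
    exact ⟨fun h => h.2, fun h => ⟨⟨a, haA, h⟩, h⟩⟩
  -- degree sums
  have hdegA : (∑ a ∈ A, (univ.filter (H.Adj a)).card) + (A ∩ ({a1, b1} : Finset V)).card
      = 3 * A.card := by
    have h1 : ∀ a ∈ A, (univ.filter (H.Adj a)).card + (if a = a1 ∨ a = b1 then 1 else 0) = 3 :=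
      fun a ha => degU hH he1 he2 ha1 hb1 ha2 hb2 hpart hcross hcubic a (hAU ha)
    have h2 : ∑ a ∈ A, ((univ.filter (H.Adj a)).card + (if a = a1 ∨ a = b1 then 1 else 0))
        = 3 * A.card := by
      rw [Finset.sum_congr rfl h1, Finset.sum_const, smul_eq_mul, mul_comm]
    rw [Finset.sum_add_distrib] at h2
    have h3' : ∑ a ∈ A, (if a = a1 ∨ a = b1 then 1 else 0) = (A ∩ ({a1, b1} : Finset V)).card := by
      have he : A ∩ ({a1, b1} : Finset V) = A.filter (fun a => a = a1 ∨ a = b1) := by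
        ext a
        simp [Finset.mem_inter, Finset.mem_insert, Finset.mem_singleton, Finset.mem_filter]
      rw [he, Finset.card_filter]
    omega
  have hH' : ∀ x y, H.Adj x y ↔ G.Adj x y ∧ s(x, y) ≠ s(a2, b2) ∧ s(x, y) ≠ s(a1, b1) := by
    intro x y; rw [hH]; tauto
  have hpart' : ∀ v, v ∈ U ↔ v ∉ W := by
    intro v
    constructor
    · exact fun h => fun hw => hUWdisj v h hw
    · intro h
      by_contra hU
      exact h ((hpart v).mpr hU)
  have hcross' : ∀ x y, H.Adj x y → (x ∈ W ↔ y ∈ U) :=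
    fun x y h => ((hcross y x h.symm)).symm
  have hdegT : (∑ t ∈ T, (univ.filter (H.Adj t)).card) + (T ∩ ({a2, b2} : Finset V)).card
      = 3 * T.card := by
    have h1 : ∀ t ∈ T, (univ.filter (H.Adj t)).card + (if t = a2 ∨ t = b2 then 1 else 0) = 3 :=
      fun t ht => degU hH' he2 he1 ha2 hb2 ha1 hb1 hpart' hcross' hcubic t (hTW ht)
    have h2 : ∑ t ∈ T, ((univ.filter (H.Adj t)).card + (if t = a2 ∨ t = b2 then 1 else 0))
        = 3 * T.card := by
      rw [Finset.sum_congr rfl h1, Finset.sum_const, smul_eq_mul, mul_comm]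
    rw [Finset.sum_add_distrib] at h2
    have h3' : ∑ t ∈ T, (if t = a2 ∨ t = b2 then 1 else 0) = (T ∩ ({a2, b2} : Finset V)).card := by
      have he : T ∩ ({a2, b2} : Finset V) = T.filter (fun t => t = a2 ∨ t = b2) := by
        ext t
        simp [Finset.mem_inter, Finset.mem_insert, Finset.mem_singleton, Finset.mem_filter]
      rw [he, Finset.card_filter]
    omega
  -- size bound on T
  have hTsize : T.card + 1 ≤ A.card + (T ∩ R).card := by
    have := Finset.card_inter_add_card_sdiff T R
    omega
  -- final contradiction via the cut lemma
  refine cut_lemma hcubic h3 X ⟨hAne.choose, hAX hAne.choose_spec⟩ ⟨z, hzX⟩ ?_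
  rw [hX, Finset.sum_union hdisjAT]
  have hXcompl : (A ∪ T)ᶜ = Xᶜ := by rw [hX]
  rw [hXcompl]
  set p := (A ∩ ({a1, b1} : Finset V)).card
  set q := (T ∩ ({a2, b2} : Finset V)).card
  set r := (T ∩ R).card
  rcases hcase with hc | ⟨hc1, hc2⟩ <;> omega


include hH he1 he2 ha1 hb1 ha2 hb2 hpart hcross hcard in
lemma hallEdge (hcubic : ∀ v : V, G.degree v = 3)
    (h3 : ∀ S : Set V, S.ncard ≤ 2 → (G.induce Sᶜ).Connected)
    (u v : V) (hu : u ∈ U) (hv : v ∈ W) :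
    ∀ A : Finset V, A ⊆ U.erase u →
      A.card ≤ ((W.erase v).filter (fun y => ∃ a ∈ A, H.Adj a y)).card := by
  intro A hA
  by_contra hcon
  push_neg at hcon
  rcases A.eq_empty_or_nonempty with rfl | hAne
  · simp at hcon
  have hAU : A ⊆ U := hA.trans (Finset.erase_subset _ _)
  set T : Finset V := univ.filter (fun y => ∃ a ∈ A, H.Adj a y) with hT
  have hTW : T ⊆ W := by
    intro y hy
    rw [hT, Finset.mem_filter] at hy
    obtain ⟨-, a, haA, hadj⟩ := hy
    exact (hcross a y hadj).mp (hAU haA)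
  have hYT : (W.erase v).filter (fun y => ∃ a ∈ A, H.Adj a y) = T \ ({v} : Finset V) := by
    ext y
    simp only [Finset.mem_filter, Finset.mem_erase, Finset.mem_sdiff, Finset.mem_singleton,
      hT, Finset.mem_univ, true_and]
    constructor
    · rintro ⟨⟨hyv, hyW⟩, h⟩
      exact ⟨h, hyv⟩
    · rintro ⟨h, hyv⟩
      exact ⟨⟨hyv, hTW (by rw [hT, Finset.mem_filter]; exact ⟨Finset.mem_univ y, h⟩)⟩, h⟩
  refine hallAux hH he1 he2 ha1 hb1 ha2 hb2 hpart hcross hcard hcubic h3 A ({v} : Finset V)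
    hAU hAne ⟨u, hu, fun hc => (Finset.mem_erase.mp (hA hc)).1 rfl⟩ ?_ ?_
  · rw [← hYT]
    exact hcon
  · left
    calc (T ∩ ({v} : Finset V)).card ≤ ({v} : Finset V).card :=
      Finset.card_le_card Finset.inter_subset_right
    _ = 1 := Finset.card_singleton v

include hH he1 he2 ha1 hb1 ha2 hb2 hpart hcross hcard in
lemma hallDbl (hcubic : ∀ v : V, G.degree v = 3)
    (h3 : ∀ S : Set V, S.ncard ≤ 2 → (G.induce Sᶜ).Connected) :
    ∀ A : Finset V, A ⊆ (U.erase a1).erase b1 →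
      A.card ≤ (((W.erase a2).erase b2).filter (fun y => ∃ a ∈ A, H.Adj a y)).card := by
  intro A hA
  by_contra hcon
  push_neg at hcon
  rcases A.eq_empty_or_nonempty with rfl | hAne
  · simp at hcon
  have hAU : A ⊆ U := fun a ha =>
    (Finset.erase_subset _ _) ((Finset.erase_subset _ _) (hA ha))
  set T : Finset V := univ.filter (fun y => ∃ a ∈ A, H.Adj a y) with hT
  have hTW : T ⊆ W := by
    intro y hy
    rw [hT, Finset.mem_filter] at hy
    obtain ⟨-, a, haA, hadj⟩ := hy
    exact (hcross a y hadj).mp (hAU haA)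
  have hYT : ((W.erase a2).erase b2).filter (fun y => ∃ a ∈ A, H.Adj a y)
      = T \ ({a2, b2} : Finset V) := by
    ext y
    simp only [Finset.mem_filter, Finset.mem_erase, Finset.mem_sdiff, Finset.mem_insert,
      Finset.mem_singleton, hT, Finset.mem_univ, true_and]
    constructor
    · rintro ⟨⟨hyb, hya, hyW⟩, h⟩
      exact ⟨h, by tauto⟩
    · rintro ⟨h, hy⟩
      push_neg at hy
      exact ⟨⟨hy.2, hy.1, hTW (by rw [hT, Finset.mem_filter]; exact ⟨Finset.mem_univ y, h⟩)⟩, h⟩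
  refine hallAux hH he1 he2 ha1 hb1 ha2 hb2 hpart hcross hcard hcubic h3 A ({a2, b2} : Finset V)
    hAU hAne ⟨a1, ha1, fun hc => (Finset.mem_erase.mp ((Finset.erase_subset _ _) (hA hc))).1 rfl⟩
    ?_ ?_
  · rw [← hYT]
    exact hcon
  · right
    constructor
    · exact le_rfl
    · rw [Finset.card_eq_zero, Finset.eq_empty_iff_forall_notMem]
      intro x hx
      rw [Finset.mem_inter, Finset.mem_insert, Finset.mem_singleton] at hx
      obtain ⟨hxA, hx12⟩ := hx
      rcases hx12 with rfl | rfl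
      · exact (Finset.mem_erase.mp ((Finset.erase_subset _ _) (hA hxA))).1 rfl
      · exact (Finset.mem_erase.mp (hA hxA)).1 rfl

include hH he1 he2 ha1 hb1 ha2 hb2 hpart hcross hcard in
lemma pmEdge (hcubic : ∀ v : V, G.degree v = 3)
    (h3 : ∀ S : Set V, S.ncard ≤ 2 → (G.induce Sᶜ).Connected)
    (u v : V) (hu : u ∈ U) (hv : v ∈ W) (huv : H.Adj u v) :
    ∃ M : Subgraph H, M.IsPerfectMatching ∧ s(u, v) ∈ M.edgeSet := by
  classical
  have hUWdisj : ∀ x, x ∈ U → x ∉ W := fun x hx hw => (hpart x).mp hw hx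
  obtain ⟨M₀, hM₀v, hM₀m⟩ := exists_matching_of_hall H (U.erase u) (W.erase v)
    (by
      rw [Set.disjoint_left]
      intro a ha ha'
      rw [Finset.mem_coe, Finset.mem_erase] at ha ha'
      exact hUWdisj a ha.2 ha'.2)
    (by rw [Finset.card_erase_of_mem hu, Finset.card_erase_of_mem hv, hcard])
    (hallEdge hH he1 he2 ha1 hb1 ha2 hb2 hpart hcross hcard hcubic h3 u v hu hv)
  set M : Subgraph H := M₀ ⊔ H.subgraphOfAdj huv with hM
  have hm : M.IsMatching := by
    refine hM₀m.sup (Subgraph.IsMatching.subgraphOfAdj huv) ?_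
    rw [hM₀m.support_eq_verts, hM₀v, support_subgraphOfAdj]
    rw [Set.disjoint_right]
    intro x hx
    rw [Set.mem_insert_iff, Set.mem_singleton_iff] at hx
    rw [Set.mem_union, Finset.mem_coe, Finset.mem_coe, Finset.mem_erase, Finset.mem_erase]
    rcases hx with rfl | rfl
    · rintro (⟨h, -⟩ | ⟨-, h⟩)
      · exact h rfl
      · exact hUWdisj x hu h
    · rintro (⟨-, h⟩ | ⟨h, -⟩)
      · exact hUWdisj x h hv
      · exact h rfl
  refine ⟨M, ⟨hm, ?_⟩, ?_⟩
  · intro x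
    rw [hM, Subgraph.verts_sup, hM₀v]
    rw [Set.mem_union, Set.mem_union]
    by_cases hxu : x = u
    · subst hxu; right; simp
    · by_cases hxv : x = v
      · subst hxv; right; simp
      · left
        by_cases hxU : x ∈ U
        · exact Or.inl (by rw [Finset.mem_coe, Finset.mem_erase]; exact ⟨hxu, hxU⟩)
        · exact Or.inr (by
            rw [Finset.mem_coe, Finset.mem_erase]
            exact ⟨hxv, (hpart x).mpr hxU⟩)
  · rw [Subgraph.mem_edgeSet, hM]
    exact Subgraph.sup_adj.mpr (Or.inr (by simp))

include hH he1 he2 ha1 hb1 ha2 hb2 hpart hcross hcard in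
lemma pmDbl (hcubic : ∀ v : V, G.degree v = 3)
    (h3 : ∀ S : Set V, S.ncard ≤ 2 → (G.induce Sᶜ).Connected) :
    ∃ M : Subgraph G, M.IsPerfectMatching ∧
      s(a1, b1) ∈ M.edgeSet ∧ s(a2, b2) ∈ M.edgeSet := by
  classical
  have hUWdisj : ∀ x, x ∈ U → x ∉ W := fun x hx hw => (hpart x).mp hw hx
  have hab1 : a1 ≠ b1 := he1.ne
  have hab2 : a2 ≠ b2 := he2.ne
  have hHG : H ≤ G := fun x y h => ((hH x y).mp h).1
  set X : Finset V := (U.erase a1).erase b1 with hXd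
  set Y : Finset V := (W.erase a2).erase b2 with hYd
  have hXU : X ⊆ U := fun x hx => (Finset.erase_subset _ _) ((Finset.erase_subset _ _) hx)
  have hYW : Y ⊆ W := fun x hx => (Finset.erase_subset _ _) ((Finset.erase_subset _ _) hx)
  obtain ⟨M₀, hM₀v, hM₀m⟩ := exists_matching_of_hall H X Y
    (by
      rw [Set.disjoint_left]
      intro a ha ha'
      rw [Finset.mem_coe] at ha ha'
      exact hUWdisj a (hXU ha) (hYW ha'))
    (by
      rw [hXd, hYd, Finset.card_erase_of_mem (Finset.mem_erase.mpr ⟨hab1.symm, hb1⟩),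
        Finset.card_erase_of_mem ha1, Finset.card_erase_of_mem (Finset.mem_erase.mpr
        ⟨hab2.symm, hb2⟩), Finset.card_erase_of_mem ha2, hcard])
    (hallDbl hH he1 he2 ha1 hb1 ha2 hb2 hpart hcross hcard hcubic h3)
  set M₁ : Subgraph G := M₀.map (SimpleGraph.Hom.ofLE hHG) with hM₁
  have hM₁m : M₁.IsMatching := hM₀m.map_ofLE hHG
  have hM₁v : M₁.verts = ↑X ∪ ↑Y := by
    rw [hM₁, Subgraph.map_verts, hM₀v]
    simp
  set M : Subgraph G := M₁ ⊔ G.subgraphOfAdj he1 ⊔ G.subgraphOfAdj he2 with hM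
  have hd1 : Disjoint M₁.support (G.subgraphOfAdj he1).support := by
    rw [hM₁m.support_eq_verts, hM₁v, support_subgraphOfAdj]
    rw [Set.disjoint_right]
    intro x hx
    rw [Set.mem_insert_iff, Set.mem_singleton_iff] at hx
    rw [Set.mem_union, Finset.mem_coe, Finset.mem_coe]
    rcases hx with rfl | rfl
    · rintro (h | h)
      · exact (Finset.mem_erase.mp ((Finset.erase_subset _ _) h)).1 rfl
      · exact hUWdisj x ha1 (hYW h)
    · rintro (h | h)
      · exact (Finset.mem_erase.mp h).1 rfl
      · exact hUWdisj x hb1 (hYW h)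
  have hsup12 : (M₁ ⊔ G.subgraphOfAdj he1).support =
      M₁.support ∪ (G.subgraphOfAdj he1).support := by
    ext w
    simp only [Subgraph.mem_support, Subgraph.sup_adj, Set.mem_union]
    exact ⟨fun ⟨y, h⟩ => h.elim (fun h' => Or.inl ⟨y, h'⟩) (fun h' => Or.inr ⟨y, h'⟩),
      fun h => h.elim (fun ⟨y, h'⟩ => ⟨y, Or.inl h'⟩) (fun ⟨y, h'⟩ => ⟨y, Or.inr h'⟩)⟩
  have hd2 : Disjoint (M₁ ⊔ G.subgraphOfAdj he1).support (G.subgraphOfAdj he2).support := by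
    rw [hsup12, hM₁m.support_eq_verts, hM₁v, support_subgraphOfAdj, support_subgraphOfAdj]
    rw [Set.disjoint_right]
    intro x hx
    rw [Set.mem_insert_iff, Set.mem_singleton_iff] at hx
    rw [Set.mem_union, Set.mem_union, Finset.mem_coe, Finset.mem_coe]
    have hxW : x ∈ W := by rcases hx with rfl | rfl; exacts [ha2, hb2]
    rintro ((h | h) | h)
    · exact hUWdisj x (hXU h) hxW
    · rcases hx with rfl | rfl
      · exact (Finset.mem_erase.mp ((Finset.erase_subset _ _) h)).1 rfl
      · exact (Finset.mem_erase.mp h).1 rfl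
    · rw [Set.mem_insert_iff, Set.mem_singleton_iff] at h
      rcases h with rfl | rfl
      · exact hUWdisj x ha1 hxW
      · exact hUWdisj x hb1 hxW
  have hm : M.IsMatching := by
    refine Subgraph.IsMatching.sup ?_ (Subgraph.IsMatching.subgraphOfAdj he2) hd2
    exact Subgraph.IsMatching.sup hM₁m (Subgraph.IsMatching.subgraphOfAdj he1) hd1
  refine ⟨M, ⟨hm, ?_⟩, ?_, ?_⟩
  · intro x
    rw [hM, Subgraph.verts_sup, Subgraph.verts_sup, hM₁v]
    simp only [subgraphOfAdj_verts, Set.mem_union, Set.mem_insert_iff, Set.mem_singleton_iff]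
    by_cases h1 : x = a1
    · tauto
    by_cases h2 : x = b1
    · tauto
    by_cases h3' : x = a2
    · tauto
    by_cases h4 : x = b2
    · tauto
    by_cases hxU : x ∈ U
    · exact Or.inl (Or.inl (Or.inl (by
        rw [Finset.mem_coe, hXd, Finset.mem_erase, Finset.mem_erase]
        exact ⟨h2, h1, hxU⟩)))
    · exact Or.inl (Or.inl (Or.inr (by
        rw [Finset.mem_coe, hYd, Finset.mem_erase, Finset.mem_erase]
        exact ⟨h4, h3', (hpart x).mpr hxU⟩)))
  · rw [Subgraph.mem_edgeSet, hM]
    exact Subgraph.sup_adj.mpr (Or.inl (Subgraph.sup_adj.mpr (Or.inr (by simp))))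
  · rw [Subgraph.mem_edgeSet, hM]
    exact Subgraph.sup_adj.mpr (Or.inr (by simp))

include hH he1 he2 ha1 hb1 ha2 hb2 hpart hcross hcard in
lemma noOdd (M : Subgraph G) (hM : M.IsPerfectMatching)
    (h1 : M.Adj a1 b1) (h2 : ¬ M.Adj a2 b2) : False := by
  classical
  have hUWdisj : ∀ x, x ∈ U → x ∉ W := fun x hx hw => (hpart x).mp hw hx
  have hm := Subgraph.isPerfectMatching_iff.mp hM
  set m : V → V := fun v => (hm v).choose with hmdef
  have hadjm : ∀ v, M.Adj v (m v) := fun v => (hm v).choose_spec.1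
  have hmaps : ∀ w ∈ W, m w ∈ (U.erase a1).erase b1 := by
    intro w hw
    have hwU : w ∉ U := fun hc => hUWdisj w hc hw
    have hGadj : G.Adj w (m w) := M.adj_sub (hadjm w)
    have hmU : m w ∈ U := by
      by_cases hc1 : s(w, m w) = s(a1, b1)
      · exfalso
        rw [Sym2.eq_iff] at hc1
        rcases hc1 with ⟨h, -⟩ | ⟨h, -⟩
        · exact hwU (h ▸ ha1)
        · exact hwU (h ▸ hb1)
      · by_cases hc2 : s(w, m w) = s(a2, b2)
        · exfalso
          rw [Sym2.eq_iff] at hc2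
          rcases hc2 with ⟨hh, hh'⟩ | ⟨hh, hh'⟩
          · exact h2 (hh ▸ hh' ▸ hadjm w)
          · exact h2 (hh ▸ hh' ▸ (hadjm w).symm)
        · have hHadj : H.Adj w (m w) := (hH _ _).mpr ⟨hGadj, hc1, hc2⟩
          have : m w ∉ W := fun hc => hwU ((hcross w (m w) hHadj).mpr hc)
          by_contra hc
          exact this ((hpart (m w)).mpr hc)
    have hma1 : m w ≠ a1 := by
      intro hc
      have : b1 = w := (hm a1).unique h1 (hc ▸ (hadjm w).symm)
      exact hUWdisj b1 hb1 (this ▸ hw)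
    have hmb1 : m w ≠ b1 := by
      intro hc
      have : a1 = w := (hm b1).unique h1.symm (hc ▸ (hadjm w).symm)
      exact hUWdisj a1 ha1 (this ▸ hw)
    exact Finset.mem_erase.mpr ⟨hmb1, Finset.mem_erase.mpr ⟨hma1, hmU⟩⟩
  have hinj : Set.InjOn m ↑W := by
    intro w hw w' hw' heq
    have h1' : M.Adj (m w) w := (hadjm w).symm
    have h2' : M.Adj (m w) w' := heq ▸ (hadjm w').symm
    exact ((hm (m w)).unique h1' h2')
  have hcardle : W.card ≤ ((U.erase a1).erase b1).card :=
    Finset.card_le_card_of_injOn m hmaps hinj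
  have hab1 : a1 ≠ b1 := he1.ne
  rw [Finset.card_erase_of_mem (Finset.mem_erase.mpr ⟨hab1.symm, hb1⟩),
    Finset.card_erase_of_mem ha1] at hcardle
  have hW1 : 1 ≤ W.card := Finset.card_pos.mpr ⟨a2, ha2⟩
  omega

include hH he1 he2 ha1 hb1 ha2 hb2 hpart hcross in
lemma existsHedge (hcubic : ∀ v : V, G.degree v = 3) : ∃ y, H.Adj a1 y := by
  classical
  by_contra hcon
  push_neg at hcon
  have hdeg : (univ.filter (G.Adj a1)).card = 3 := by
    rw [← neighborFinset_eq_filter, card_neighborFinset_eq_degree]; exact hcubic a1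
  have hmaps : ∀ y ∈ univ.filter (G.Adj a1),
      s(a1, y) ∈ ({s(a1, b1), s(a2, b2)} : Finset (Sym2 V)) := by
    intro y hy
    rw [Finset.mem_filter] at hy
    have h := hcon y
    rw [hH] at h
    push_neg at h
    rcases Classical.em (s(a1, y) = s(a1, b1)) with h' | h'
    · simp [h']
    · simp [h hy.2 h']
  have hinj : Set.InjOn (fun y => s(a1, y)) ↑(univ.filter (G.Adj a1)) := by
    intro y hy y' hy' heq
    simp only [Sym2.eq_iff] at heq
    rcases heq with ⟨-, h⟩ | ⟨h, h'⟩
    · exact h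
    · rw [Finset.mem_coe, Finset.mem_filter] at hy
      exact absurd (h' ▸ hy.2) (G.irrefl)
  have hle := Finset.card_le_card_of_injOn _ hmaps hinj
  have h2' : ({s(a1, b1), s(a2, b2)} : Finset (Sym2 V)).card ≤ 2 :=
    le_trans (Finset.card_insert_le _ _) (by simp)
  omega

include hH he1 he2 ha1 hb1 ha2 hb2 hpart hcross in
lemma Hconn (hcubic : ∀ v : V, G.degree v = 3)
    (h3 : ∀ S : Set V, S.ncard ≤ 2 → (G.induce Sᶜ).Connected) : H.Connected := by
  classical
  rw [connected_iff]
  refine ⟨?_, ⟨a1⟩⟩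
  intro x y
  by_contra hxy
  set R : Finset V := univ.filter (fun z => H.Reachable x z) with hR
  have hxR : x ∈ R := by rw [hR, Finset.mem_filter]; exact ⟨Finset.mem_univ x, Reachable.refl x⟩
  have hyR : y ∉ R := by
    rw [hR, Finset.mem_filter]
    rintro ⟨-, h⟩
    exact hxy h
  refine cut_lemma hcubic h3 R ⟨x, hxR⟩ ⟨y, Finset.mem_compl.mpr hyR⟩ ?_
  rw [← Finset.card_sigma]
  refine le_trans (Finset.card_le_card_of_injOn (t := ({s(a1, b1), s(a2, b2)} : Finset (Sym2 V))) (fun p => s(p.1, p.2)) ?_ ?_) ?_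
  · rintro ⟨z, w⟩ hp
    rw [Finset.mem_coe, Finset.mem_sigma] at hp
    obtain ⟨hzR, hw⟩ := hp
    rw [Finset.mem_filter, Finset.mem_compl] at hw
    obtain ⟨hwR, hGzw⟩ := hw
    have hnH : ¬ H.Adj z w := by
      intro hc
      refine hwR ?_
      rw [hR, Finset.mem_filter] at hzR ⊢
      exact ⟨Finset.mem_univ w, hzR.2.trans hc.reachable⟩
    rw [hH] at hnH
    push_neg at hnH
    rcases Classical.em (s(z, w) = s(a1, b1)) with h | h
    · simp [h]
    · simp [hnH hGzw h]
  · rintro ⟨z, w⟩ hp ⟨z', w'⟩ hp' heq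
    simp only [Finset.coe_sigma, Set.mem_sigma_iff, Finset.mem_coe, Finset.mem_filter,
      Finset.mem_compl] at hp hp'
    simp only [Sym2.eq_iff] at heq
    rcases heq with ⟨h1', h2'⟩ | ⟨h1', h2'⟩
    · subst h1'; subst h2'; rfl
    · exfalso
      subst h1'
      exact (hp'.2.1) (by simpa using hp.1)
  · exact le_trans (Finset.card_insert_le _ _) (by simp)

end Config

lemma Gconn {G : SimpleGraph V}
    (h3 : ∀ S : Set V, S.ncard ≤ 2 → (G.induce Sᶜ).Connected) : G.Connected := by
  have h := h3 ∅ (by simp)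
  rw [Set.compl_empty] at h
  exact (induceUnivIso G).connected_iff.mp h

lemma fin2trans : ∀ a b c : Fin 2, a ≠ b → b ≠ c → a = c := by decide

lemma buildConfig {G H : SimpleGraph V} [DecidableRel G.Adj] [DecidableRel H.Adj]
    {a1 b1 a2 b2 : V}
    (hH : ∀ x y, H.Adj x y ↔ G.Adj x y ∧ s(x, y) ≠ s(a1, b1) ∧ s(x, y) ≠ s(a2, b2))
    (he1 : G.Adj a1 b1) (he2 : G.Adj a2 b2) (hnee : s(a1, b1) ≠ s(a2, b2))
    (hcubic : ∀ v : V, G.degree v = 3)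
    (hnonbip : ¬ G.Colorable 2) (hbip : H.Colorable 2) :
    ∃ U W : Finset V, a1 ∈ U ∧ b1 ∈ U ∧ a2 ∈ W ∧ b2 ∈ W ∧
      (∀ v, v ∈ W ↔ v ∉ U) ∧ (∀ x y, H.Adj x y → (x ∈ U ↔ y ∈ W)) ∧ U.card = W.card := by
  classical
  obtain ⟨C⟩ := hbip
  have hvalid : ∀ x y, H.Adj x y → C x ≠ C y := fun x y h => C.valid h
  have hab1 : a1 ≠ b1 := he1.ne
  have hab2 : a2 ≠ b2 := he2.ne
  -- not both deleted edges cross the bipartition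
  have hnb : C a1 = C b1 ∨ C a2 = C b2 := by
    by_contra hcon
    push_neg at hcon
    obtain ⟨h1, h2⟩ := hcon
    refine hnonbip ⟨Coloring.mk C ?_⟩
    intro x y hadj
    by_cases hc1 : s(x, y) = s(a1, b1)
    · rw [Sym2.eq_iff] at hc1
      rcases hc1 with ⟨rfl, rfl⟩ | ⟨rfl, rfl⟩
      · exact h1
      · exact h1.symm
    · by_cases hc2 : s(x, y) = s(a2, b2)
      · rw [Sym2.eq_iff] at hc2
        rcases hc2 with ⟨rfl, rfl⟩ | ⟨rfl, rfl⟩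
        · exact h2
        · exact h2.symm
      · exact hvalid x y ((hH x y).mpr ⟨hadj, hc1, hc2⟩)
  set U : Finset V := univ.filter (fun v => C v = C a1) with hU
  set W : Finset V := univ.filter (fun v => C v ≠ C a1) with hW
  -- generic count of deleted-edge partners
  have hBgen : ∀ (c d : V), G.Adj c d → ∀ x : V,
      (univ.filter (fun y => G.Adj x y ∧ s(x, y) = s(c, d))).card =
      (if x = c then 1 else 0) + (if x = d then 1 else 0) := by
    intro c d hcd x
    have hcd' : c ≠ d := hcd.ne
    by_cases hxc : x = c
    · subst hxc
      have : univ.filter (fun y => G.Adj x y ∧ s(x, y) = s(x, d)) = {d} := by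
        ext y
        simp only [Finset.mem_filter, Finset.mem_univ, true_and, Finset.mem_singleton]
        constructor
        · rintro ⟨-, h⟩
          rw [Sym2.eq_iff] at h
          rcases h with ⟨-, h⟩ | ⟨h, -⟩
          · exact h
          · exact absurd h hcd'
        · rintro rfl
          exact ⟨hcd, rfl⟩
      rw [this, Finset.card_singleton, if_pos rfl, if_neg hcd']
    · by_cases hxd : x = d
      · subst hxd
        have : univ.filter (fun y => G.Adj x y ∧ s(x, y) = s(c, x)) = {c} := by
          ext y
          simp only [Finset.mem_filter, Finset.mem_univ, true_and, Finset.mem_singleton]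
          constructor
          · rintro ⟨-, h⟩
            rw [Sym2.eq_iff] at h
            rcases h with ⟨h, -⟩ | ⟨-, h⟩
            · exact absurd h.symm hcd'
            · exact h
          · rintro rfl
            exact ⟨hcd.symm, Sym2.eq_swap⟩
        rw [this, Finset.card_singleton, if_neg hxc, if_pos rfl]
      · have : univ.filter (fun y => G.Adj x y ∧ s(x, y) = s(c, d)) = ∅ := by
          rw [Finset.eq_empty_iff_forall_notMem]
          intro y hy
          rw [Finset.mem_filter] at hy
          obtain ⟨-, -, h⟩ := hy
          rw [Sym2.eq_iff] at h
          rcases h with ⟨h, -⟩ | ⟨h, -⟩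
          · exact hxc h
          · exact hxd h
        rw [this, Finset.card_empty, if_neg hxc, if_neg hxd]
  -- per-vertex degree equation
  have hB : ∀ x : V, (univ.filter (H.Adj x)).card +
      (((if x = a1 then 1 else 0) + (if x = b1 then 1 else 0)) +
       ((if x = a2 then 1 else 0) + (if x = b2 then 1 else 0))) = 3 := by
    intro x
    have hdeg : (univ.filter (G.Adj x)).card = 3 := by
      rw [← neighborFinset_eq_filter, card_neighborFinset_eq_degree]; exact hcubic x
    have hun : univ.filter (G.Adj x) = univ.filter (H.Adj x) ∪
        (univ.filter (fun y => G.Adj x y ∧ s(x, y) = s(a1, b1)) ∪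
         univ.filter (fun y => G.Adj x y ∧ s(x, y) = s(a2, b2))) := by
      ext y
      simp only [Finset.mem_filter, Finset.mem_univ, true_and, Finset.mem_union, hH]
      by_cases h1 : s(x, y) = s(a1, b1)
      · tauto
      · by_cases h2 : s(x, y) = s(a2, b2) <;> tauto
    have hd23 : Disjoint (univ.filter (fun y => G.Adj x y ∧ s(x, y) = s(a1, b1)))
        (univ.filter (fun y => G.Adj x y ∧ s(x, y) = s(a2, b2))) := by
      refine Finset.disjoint_left.mpr ?_
      intro y hy hy'
      rw [Finset.mem_filter] at hy hy'
      exact hnee (hy.2.2 ▸ hy'.2.2 ▸ rfl)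
    have hd1 : Disjoint (univ.filter (H.Adj x))
        ((univ.filter (fun y => G.Adj x y ∧ s(x, y) = s(a1, b1)) ∪
         univ.filter (fun y => G.Adj x y ∧ s(x, y) = s(a2, b2)))) := by
      refine Finset.disjoint_left.mpr ?_
      intro y hy hy'
      rw [Finset.mem_filter, hH] at hy
      rw [Finset.mem_union, Finset.mem_filter, Finset.mem_filter] at hy'
      rcases hy' with ⟨-, -, h⟩ | ⟨-, -, h⟩
      · exact hy.2.2.1 h
      · exact hy.2.2.2 h
    rw [hun, Finset.card_union_of_disjoint hd1, Finset.card_union_of_disjoint hd23] at hdeg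
    rw [hBgen a1 b1 he1 x, hBgen a2 b2 he2 x] at hdeg
    omega
  -- crossing double count
  have hcrossU : ∀ u ∈ U, W.filter (H.Adj u) = univ.filter (H.Adj u) := by
    intro u hu
    rw [hU, Finset.mem_filter] at hu
    ext y
    simp only [Finset.mem_filter, Finset.mem_univ, true_and, hW]
    refine ⟨fun h => h.2, fun h => ⟨?_, h⟩⟩
    intro hc
    exact hvalid u y h (hu.2.trans hc.symm)
  have hcrossW : ∀ w ∈ W, U.filter (H.Adj w) = univ.filter (H.Adj w) := by
    intro w hw
    rw [hW, Finset.mem_filter] at hw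
    ext y
    simp only [Finset.mem_filter, Finset.mem_univ, true_and, hU]
    refine ⟨fun h => h.2, fun h => ⟨?_, h⟩⟩
    exact fin2trans (C y) (C w) (C a1) (fun hc => hvalid w y h hc.symm) hw.2
  have hsums : ∑ u ∈ U, (univ.filter (H.Adj u)).card
      = ∑ w ∈ W, (univ.filter (H.Adj w)).card := by
    calc ∑ u ∈ U, (univ.filter (H.Adj u)).card
        = ∑ u ∈ U, (W.filter (H.Adj u)).card :=
          Finset.sum_congr rfl (fun u hu => by rw [hcrossU u hu])
      _ = ∑ w ∈ W, (U.filter (H.Adj w)).card := adj_sum_comm H U W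
      _ = ∑ w ∈ W, (univ.filter (H.Adj w)).card :=
          Finset.sum_congr rfl (fun w hw => by rw [hcrossW w hw])
  -- sum the degree equation over U and W
  have hsumU : (∑ u ∈ U, (univ.filter (H.Adj u)).card) +
      ((if a1 ∈ U then 1 else 0) + (if b1 ∈ U then 1 else 0) +
       ((if a2 ∈ U then 1 else 0) + (if b2 ∈ U then 1 else 0))) = 3 * U.card := by
    have := Finset.sum_congr rfl (fun x (_ : x ∈ U) => hB x)
    rw [Finset.sum_add_distrib, Finset.sum_add_distrib, Finset.sum_add_distrib,
      Finset.sum_add_distrib, Finset.sum_const, smul_eq_mul, mul_comm] at this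
    rw [Finset.sum_ite_eq' U a1 (fun _ => 1), Finset.sum_ite_eq' U b1 (fun _ => 1),
      Finset.sum_ite_eq' U a2 (fun _ => 1), Finset.sum_ite_eq' U b2 (fun _ => 1)] at this
    omega
  have hsumW : (∑ w ∈ W, (univ.filter (H.Adj w)).card) +
      ((if a1 ∈ W then 1 else 0) + (if b1 ∈ W then 1 else 0) +
       ((if a2 ∈ W then 1 else 0) + (if b2 ∈ W then 1 else 0))) = 3 * W.card := by
    have := Finset.sum_congr rfl (fun x (_ : x ∈ W) => hB x)
    rw [Finset.sum_add_distrib, Finset.sum_add_distrib, Finset.sum_add_distrib,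
      Finset.sum_add_distrib, Finset.sum_const, smul_eq_mul, mul_comm] at this
    rw [Finset.sum_ite_eq' W a1 (fun _ => 1), Finset.sum_ite_eq' W b1 (fun _ => 1),
      Finset.sum_ite_eq' W a2 (fun _ => 1), Finset.sum_ite_eq' W b2 (fun _ => 1)] at this
    omega
  -- membership indicators
  have hcompl : ∀ x : V, (x ∈ W ↔ x ∉ U) := by
    intro x
    rw [hU, hW, Finset.mem_filter, Finset.mem_filter]
    simp
  have ha1U : a1 ∈ U := by rw [hU, Finset.mem_filter]; exact ⟨Finset.mem_univ _, rfl⟩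
  have hnb2 : b1 ∈ U ∨ (a2 ∈ U ↔ b2 ∈ U) := by
    rcases hnb with h | h
    · left; rw [hU, Finset.mem_filter]; exact ⟨Finset.mem_univ _, h.symm⟩
    · right
      simp only [hU, Finset.mem_filter, Finset.mem_univ, true_and, h]
  have key : b1 ∈ U ∧ a2 ∉ U ∧ b2 ∉ U ∧ U.card = W.card := by
    by_cases hb1U : b1 ∈ U <;> by_cases ha2U : a2 ∈ U <;> by_cases hb2U : b2 ∈ U <;>
      simp only [hcompl, ha1U, hb1U, ha2U, hb2U, not_true_eq_false, not_false_eq_true,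
        if_true, if_false, ite_true, ite_false] at hsumU hsumW <;>
      first
        | exact ⟨hb1U, ha2U, hb2U, by omega⟩
        | omega
        | tauto
  have hcrossFinal : ∀ x y, H.Adj x y → (x ∈ U ↔ y ∈ W) := by
    intro x y h
    rw [hU, hW, Finset.mem_filter, Finset.mem_filter]
    constructor
    · rintro ⟨-, hx⟩
      exact ⟨Finset.mem_univ _, fun hc => hvalid x y h (hx.trans hc.symm)⟩
    · rintro ⟨-, hy⟩
      exact ⟨Finset.mem_univ _, fin2trans (C x) (C y) (C a1) (hvalid x y h) hy⟩
  exact ⟨U, W, ha1U, key.1, (hcompl a2).mpr key.2.1, (hcompl b2).mpr key.2.2.1,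
    hcompl, hcrossFinal, key.2.2.2⟩

end Stmt16Aux

/-- a 3-connected cubic nonbipartite graph `G` with two edges
whose removal makes it bipartite is matching covered with removable doubleton
`{e₁, e₂}`. -/
theorem stmt16 [Fintype V] [DecidableEq V] (G : SimpleGraph V)
    [DecidableRel G.Adj]
    (hcubic : ∀ v : V, G.degree v = 3) (h3 : ThreeConnected G)
    (hnonbip : ¬ G.Colorable 2)
    (a1 b1 a2 b2 : V) (he1 : G.Adj a1 b1) (he2 : G.Adj a2 b2)
    (hnee : s(a1, b1) ≠ s(a2, b2))
    (hbip : (G.deleteEdges {s(a1, b1), s(a2, b2)}).Colorable 2) :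
    MatchingCovered G ∧
      ¬ Removable G s(a1, b1) ∧ ¬ Removable G s(a2, b2) ∧
      MatchingCovered (G.deleteEdges {s(a1, b1), s(a2, b2)}) := by

  classical
  set H : SimpleGraph V := G.deleteEdges {s(a1, b1), s(a2, b2)} with hHdef
  have hH : ∀ x y, H.Adj x y ↔ G.Adj x y ∧ s(x, y) ≠ s(a1, b1) ∧ s(x, y) ≠ s(a2, b2) := by
    intro x y
    rw [hHdef, SimpleGraph.deleteEdges_adj]
    simp only [Set.mem_insert_iff, Set.mem_singleton_iff]
    tauto
  haveI hdec : DecidableRel H.Adj := fun x y => decidable_of_iff _ (hH x y).symm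
  have h3' : ∀ S : Set V, S.ncard ≤ 2 → (G.induce Sᶜ).Connected := fun S hS => h3.2 S hS
  obtain ⟨U, W, ha1U, hb1U, ha2W, hb2W, hpart, hcross, hcard⟩ :=
    Stmt16Aux.buildConfig hH he1 he2 hnee hcubic hnonbip hbip
  have hH' : ∀ x y, H.Adj x y ↔ G.Adj x y ∧ s(x, y) ≠ s(a2, b2) ∧ s(x, y) ≠ s(a1, b1) := by
    intro x y; rw [hH]; tauto
  have hpart' : ∀ v, v ∈ U ↔ v ∉ W := by
    intro v
    rw [hpart]
    tauto
  have hcross' : ∀ x y, H.Adj x y → (x ∈ W ↔ y ∈ U) :=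
    fun x y h => ((hcross y x h.symm)).symm
  have hHG : H ≤ G := fun x y h => ((hH x y).mp h).1
  have lift : ∀ (M : SimpleGraph.Subgraph H) (e : Sym2 V), M.IsPerfectMatching →
      e ∈ M.edgeSet → ∃ M' : SimpleGraph.Subgraph G, M'.IsPerfectMatching ∧ e ∈ M'.edgeSet := by
    intro M e hM heM
    refine ⟨M.map (SimpleGraph.Hom.ofLE hHG), ⟨hM.1.map_ofLE hHG, fun v => ⟨v, hM.2 v, rfl⟩⟩, ?_⟩
    revert heM
    refine Sym2.ind (fun x y hxy => ?_) e
    exact SimpleGraph.Subgraph.mem_edgeSet.mpr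
      ⟨x, y, SimpleGraph.Subgraph.mem_edgeSet.mp hxy, rfl, rfl⟩
  have pmH : ∀ x y, H.Adj x y →
      ∃ M : SimpleGraph.Subgraph H, M.IsPerfectMatching ∧ s(x, y) ∈ M.edgeSet := by
    intro x y hxy
    by_cases hxU : x ∈ U
    · exact Stmt16Aux.pmEdge hH he1 he2 ha1U hb1U ha2W hb2W hpart hcross hcard hcubic h3'
        x y hxU ((hcross x y hxy).mp hxU) hxy
    · have hxW : x ∈ W := (hpart x).mpr hxU
      have hyU : y ∈ U := (hcross' x y hxy).mp hxW
      exact Stmt16Aux.pmEdge hH' he2 he1 ha2W hb2W ha1U hb1U hpart' hcross' hcard.symm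
        hcubic h3' x y hxW hyU hxy
  have hMCG : MatchingCovered G := by
    refine ⟨Stmt16Aux.Gconn h3', ⟨s(a1, b1), he1⟩, ?_⟩
    intro e
    induction e using Sym2.ind with
    | _ x y =>
      intro hxy
      rw [SimpleGraph.mem_edgeSet] at hxy
      by_cases hc1 : s(x, y) = s(a1, b1)
      · obtain ⟨M, hM, hM1, hM2⟩ := Stmt16Aux.pmDbl hH he1 he2 ha1U hb1U ha2W hb2W hpart
          hcross hcard hcubic h3'
        exact ⟨M, hM, hc1 ▸ hM1⟩
      · by_cases hc2 : s(x, y) = s(a2, b2)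
        · obtain ⟨M, hM, hM1, hM2⟩ := Stmt16Aux.pmDbl hH he1 he2 ha1U hb1U ha2W hb2W hpart
            hcross hcard hcubic h3'
          exact ⟨M, hM, hc2 ▸ hM2⟩
        · obtain ⟨M, hM, hMe⟩ := pmH x y ((hH x y).mpr ⟨hxy, hc1, hc2⟩)
          exact lift M _ hM hMe
  have hMCH : MatchingCovered H := by
    refine ⟨Stmt16Aux.Hconn hH he1 he2 ha1U hb1U ha2W hb2W hpart hcross hcubic h3', ?_, ?_⟩
    · obtain ⟨y, hy⟩ := Stmt16Aux.existsHedge hH he1 he2 ha1U hb1U ha2W hb2W hpart hcross hcubic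
      exact ⟨s(a1, y), hy⟩
    · intro e
      induction e using Sym2.ind with
      | _ x y =>
        intro hxy
        rw [SimpleGraph.mem_edgeSet] at hxy
        exact pmH x y hxy
  have hnotRem1 : ¬ Removable G s(a1, b1) := by
    rintro ⟨-, hMC⟩
    obtain ⟨-, -, hpm⟩ := hMC
    have he2' : s(a2, b2) ∈ (G.deleteEdges {s(a1, b1)}).edgeSet := by
      rw [SimpleGraph.mem_edgeSet, SimpleGraph.deleteEdges_adj]
      exact ⟨he2, by simpa using hnee.symm⟩
    obtain ⟨M, hM, hMe⟩ := hpm _ he2'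
    refine Stmt16Aux.noOdd hH' he2 he1 ha2W hb2W ha1U hb1U hpart' hcross' hcard.symm
      (M.map (SimpleGraph.Hom.ofLE (SimpleGraph.deleteEdges_le {s(a1, b1)})))
      ⟨hM.1.map_ofLE _, fun v => ⟨v, hM.2 v, rfl⟩⟩ ?_ ?_
    · exact ⟨a2, b2, SimpleGraph.Subgraph.mem_edgeSet.mp hMe, rfl, rfl⟩
    · rintro ⟨u, v, huv, hu, hv⟩
      simp only [SimpleGraph.Hom.coe_ofLE, id_eq] at hu hv
      subst hu; subst hv
      have hadj := M.adj_sub huv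
      rw [SimpleGraph.deleteEdges_adj] at hadj
      exact hadj.2 rfl
  have hnotRem2 : ¬ Removable G s(a2, b2) := by
    rintro ⟨-, hMC⟩
    obtain ⟨-, -, hpm⟩ := hMC
    have he1' : s(a1, b1) ∈ (G.deleteEdges {s(a2, b2)}).edgeSet := by
      rw [SimpleGraph.mem_edgeSet, SimpleGraph.deleteEdges_adj]
      exact ⟨he1, by simpa using hnee⟩
    obtain ⟨M, hM, hMe⟩ := hpm _ he1'
    refine Stmt16Aux.noOdd hH he1 he2 ha1U hb1U ha2W hb2W hpart hcross hcard
      (M.map (SimpleGraph.Hom.ofLE (SimpleGraph.deleteEdges_le {s(a2, b2)})))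
      ⟨hM.1.map_ofLE _, fun v => ⟨v, hM.2 v, rfl⟩⟩ ?_ ?_
    · exact ⟨a1, b1, SimpleGraph.Subgraph.mem_edgeSet.mp hMe, rfl, rfl⟩
    · rintro ⟨u, v, huv, hu, hv⟩
      simp only [SimpleGraph.Hom.coe_ofLE, id_eq] at hu hv
      subst hu; subst hv
      have hadj := M.adj_sub huv
      rw [SimpleGraph.deleteEdges_adj] at hadj
      exact hadj.2 rfl
  exact ⟨hMCG, hnotRem1, hnotRem2, hMCH⟩
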